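/- Support recovery via the continuous-to-finite block: let A be an M × N complex matrix such that every set of at most 2k columns of A is linearly independent. Let x₁, …, x_m ∈ ℂ^N be jointly sparse with joint support S = ⋃_n supp(x_n) satisfying |S| ≤ k, let z_n = A·x_n, let Q = Σ_{n=1}^{m} z_n z_n^H, and let V be any M × r complex matrix with V·V^H = Q. Then: (a) there exists an N × r matrix U₀ with row support contained in S such that A·U₀ = V; and (b) every matrix U that minimizes the number of nonzero rows among all solutions of A·U = V has row support exactly equal to S. -/

import Mathlib

open Matrix

lemma mem_of_dual {E : Type*} [AddCommGroup E] [Module ℂ E]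
    (p : Submodule ℂ E) (v : E)
    (h : ∀ f : Module.Dual ℂ E, (∀ y ∈ p, f y = 0) → f v = 0) : v ∈ p := by
  rw [← Subspace.dualAnnihilator_dualCoannihilator_eq (W := p)]
  rw [Submodule.mem_dualCoannihilator]
  intro f hf
  exact h f (fun y hy => (Submodule.mem_dualAnnihilator f).mp hf y hy)

lemma quadform {M p : ℕ} (B : Matrix (Fin M) (Fin p) ℂ) (w : Fin M → ℂ) :
    ∑ i, ∑ i', w i * (∑ t, B i t * (starRingEnd ℂ) (B i' t)) * (starRingEnd ℂ) (w i')
    = ∑ t, (vecMul w B t) * (starRingEnd ℂ) (vecMul w B t) := by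
  have lhs : ∑ i, ∑ i', w i * (∑ t, B i t * (starRingEnd ℂ) (B i' t)) * (starRingEnd ℂ) (w i')
      = ∑ i, ∑ i', ∑ t, w i * B i t * ((starRingEnd ℂ) (w i') * (starRingEnd ℂ) (B i' t)) := by
    refine Finset.sum_congr rfl fun i _ => Finset.sum_congr rfl fun i' _ => ?_
    rw [Finset.mul_sum, Finset.sum_mul]
    exact Finset.sum_congr rfl fun t _ => by ring
  rw [lhs]
  have rhs : ∀ t, (vecMul w B t) * (starRingEnd ℂ) (vecMul w B t)
      = ∑ i, ∑ i', w i * B i t * ((starRingEnd ℂ) (w i') * (starRingEnd ℂ) (B i' t)) := by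
    intro t
    simp only [vecMul, dotProduct, map_sum, RingHom.map_mul, Finset.sum_mul_sum]
  rw [Finset.sum_congr rfl fun t (_ : t ∈ Finset.univ) => rhs t]
  rw [Finset.sum_comm (γ := Fin p)]
  refine Finset.sum_congr rfl fun i _ => ?_
  rw [Finset.sum_comm]

lemma sum_mul_conj_eq_zero {p : ℕ} {c : Fin p → ℂ}
    (h : ∑ j, c j * (starRingEnd ℂ) (c j) = 0) : ∀ j, c j = 0 := by
  have h' : ∑ j, (Complex.normSq (c j) : ℂ) = 0 := by
    simpa [Complex.mul_conj] using h
  have h'' : ∑ j, Complex.normSq (c j) = 0 := by exact_mod_cast h'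
  intro j
  have := (Finset.sum_eq_zero_iff_of_nonneg
    (fun j _ => Complex.normSq_nonneg (c j))).mp h'' j (Finset.mem_univ j)
  exact Complex.normSq_eq_zero.mp this

theorem CTF_support_recovery (M N m r k : ℕ) (A : Matrix (Fin M) (Fin N) ℂ)
    (hA : ∀ S : Finset (Fin N), S.card ≤ 2 * k →
      LinearIndependent ℂ (fun j : S => A.transpose j.val))
    (x : Fin m → (Fin N → ℂ))
    (S : Set (Fin N)) (hS : S = ⋃ n, Function.support (x n)) (hScard : S.ncard ≤ k)
    (z : Fin m → (Fin M → ℂ)) (hz : ∀ n, z n = A.mulVec (x n))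
    (Q : Matrix (Fin M) (Fin M) ℂ)
    (hQ : Q = ∑ n, Matrix.vecMulVec (z n) (fun j => starRingEnd ℂ (z n j)))
    (V : Matrix (Fin M) (Fin r) ℂ) (hV : V * V.conjTranspose = Q) :
    (∃ U₀ : Matrix (Fin N) (Fin r) ℂ, {i | U₀ i ≠ 0} ⊆ S ∧ A * U₀ = V) ∧
    (∀ U : Matrix (Fin N) (Fin r) ℂ, A * U = V →
      (∀ U' : Matrix (Fin N) (Fin r) ℂ, A * U' = V →
        {i | U i ≠ 0}.ncard ≤ {i | U' i ≠ 0}.ncard) →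
      {i | U i ≠ 0} = S) := by
  classical
  -- the matrix whose columns are the z n
  set Bz : Matrix (Fin M) (Fin m) ℂ := Matrix.of (fun i n => z n i) with hBz
  have e1 : ∀ i i', Q i i' = ∑ n, Bz i n * (starRingEnd ℂ) (Bz i' n) := by
    intro i i'
    simp [hQ, Matrix.sum_apply, Matrix.vecMulVec_apply, hBz]
  have e2 : ∀ i i', Q i i' = ∑ t, V i t * (starRingEnd ℂ) (V i' t) := by
    intro i i'
    rw [← hV]
    simp [Matrix.mul_apply, Matrix.conjTranspose_apply]
  have key : ∀ w : Fin M → ℂ,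
      ∑ n, (vecMul w Bz n) * (starRingEnd ℂ) (vecMul w Bz n)
      = ∑ t, (vecMul w V t) * (starRingEnd ℂ) (vecMul w V t) := by
    intro w
    rw [← quadform Bz w, ← quadform V w]
    refine Finset.sum_congr rfl fun i _ => Finset.sum_congr rfl fun i' _ => ?_
    rw [← e1 i i', ← e2 i i']
  -- each column of V lies in the span of the z n, and conversely
  have hmemV : ∀ t, (fun i => V i t) ∈ Submodule.span ℂ (Set.range z) := by
    intro t
    apply mem_of_dual
    intro f hf
    set w : Fin M → ℂ := fun i => f (fun j => if i = j then 1 else 0) with hw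
    have hfeq : ∀ v : Fin M → ℂ, f v = ∑ i, v i * w i := by
      intro v
      conv_lhs => rw [pi_eq_sum_univ v, map_sum]
      exact Finset.sum_congr rfl fun i _ => by rw [_root_.map_smul, smul_eq_mul, hw]
    have hz0 : ∀ n, vecMul w Bz n = 0 := by
      intro n
      have h0 : f (z n) = 0 := hf (z n) (Submodule.subset_span ⟨n, rfl⟩)
      rw [hfeq] at h0
      simpa [vecMul, dotProduct, hBz, mul_comm] using h0
    have hsum : ∑ t, (vecMul w V t) * (starRingEnd ℂ) (vecMul w V t) = 0 := by
      rw [← key w]; simp [hz0]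
    have hu := sum_mul_conj_eq_zero hsum t
    rw [hfeq]
    simpa [vecMul, dotProduct, mul_comm] using hu
  have hmemZ : ∀ n, z n ∈ Submodule.span ℂ (Set.range (fun t i => V i t)) := by
    intro n
    apply mem_of_dual
    intro f hf
    set w : Fin M → ℂ := fun i => f (fun j => if i = j then 1 else 0) with hw
    have hfeq : ∀ v : Fin M → ℂ, f v = ∑ i, v i * w i := by
      intro v
      conv_lhs => rw [pi_eq_sum_univ v, map_sum]
      exact Finset.sum_congr rfl fun i _ => by rw [_root_.map_smul, smul_eq_mul, hw]
    have hv0 : ∀ t, vecMul w V t = 0 := by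
      intro t
      have h0 : f (fun i => V i t) = 0 := hf _ (Submodule.subset_span ⟨t, rfl⟩)
      rw [hfeq] at h0
      simpa [vecMul, dotProduct, mul_comm] using h0
    have hsum : ∑ n', (vecMul w Bz n') * (starRingEnd ℂ) (vecMul w Bz n') = 0 := by
      rw [key w]; simp [hv0]
    have hu := sum_mul_conj_eq_zero hsum n
    rw [hfeq]
    simpa [vecMul, dotProduct, hBz, mul_comm] using hu
  -- uniqueness of sparse solutions
  have uniq : ∀ (T : Set (Fin N)), T.ncard ≤ 2 * k → ∀ y : Fin N → ℂ,
      (∀ i, y i ≠ 0 → i ∈ T) → A.mulVec y = 0 → y = 0 := by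
    intro T hT y hsupp hy
    have hTfin : T.Finite := Set.toFinite T
    set F : Finset (Fin N) := hTfin.toFinset with hF
    have hFcard : F.card ≤ 2 * k := by
      rw [hF, ← Set.ncard_eq_toFinset_card T hTfin]; exact hT
    have li := hA F hFcard
    have hsum : ∑ j : F, y j • A.transpose j.val = 0 := by
      rw [Finset.sum_coe_sort F (fun j => y j • A.transpose j)]
      rw [Finset.sum_subset (Finset.subset_univ F)]
      · funext i
        rw [Finset.sum_apply]
        simpa [mulVec, dotProduct, transpose_apply, mul_comm] using congrFun hy i
      · intro j _ hj
        have : y j = 0 := by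
          by_contra hne
          exact hj (by simpa [hF] using hsupp j hne)
        simp [this]
    have hzero := (Fintype.linearIndependent_iff.mp li) (fun j => y j) hsum
    funext i
    by_cases hi : i ∈ F
    · exact hzero ⟨i, hi⟩
    · by_contra hne
      exact hi (by simpa [hF] using hsupp i hne)
  -- part (a)
  have parta : ∃ U₀ : Matrix (Fin N) (Fin r) ℂ, {i | U₀ i ≠ 0} ⊆ S ∧ A * U₀ = V := by
    have hc : ∀ t, ∃ c : Fin m → ℂ, ∑ n, c n • z n = fun i => V i t := by
      intro t
      exact (Submodule.mem_span_range_iff_exists_fun ℂ).mp (hmemV t)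
    choose c hc using hc
    refine ⟨Matrix.of (fun i t => ∑ n, c t n * x n i), ?_, ?_⟩
    · intro i hi
      simp only [Set.mem_setOf_eq] at hi
      have : ∃ t, ∑ n, c t n * x n i ≠ 0 := by
        by_contra hno
        push_neg at hno
        exact hi (funext fun t => hno t)
      obtain ⟨t, ht⟩ := this
      have : ∃ n, x n i ≠ 0 := by
        by_contra hno
        push_neg at hno
        exact ht (Finset.sum_eq_zero fun n _ => by rw [hno n, mul_zero])
      obtain ⟨n, hn⟩ := this
      rw [hS]
      exact Set.mem_iUnion.mpr ⟨n, hn⟩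
    · funext i t
      have := congrFun (hc t) i
      simp only [Finset.sum_apply, Pi.smul_apply, smul_eq_mul] at this
      calc (A * Matrix.of (fun i t => ∑ n, c t n * x n i)) i t
          = ∑ j, A i j * ∑ n, c t n * x n j := by simp [Matrix.mul_apply]
        _ = ∑ n, c t n * ∑ j, A i j * x n j := by
            rw [show (∑ j, A i j * ∑ n, c t n * x n j)
                = ∑ j, ∑ n, c t n * (A i j * x n j) from
              Finset.sum_congr rfl fun j _ => by
                rw [Finset.mul_sum]
                exact Finset.sum_congr rfl fun n _ => by ring]
            rw [Finset.sum_comm]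
            exact Finset.sum_congr rfl fun n _ => (Finset.mul_sum _ _ _).symm
        _ = ∑ n, c t n * z n i := by
            refine Finset.sum_congr rfl fun n _ => ?_
            rw [hz n]; rfl
        _ = V i t := this
  obtain ⟨U₀, hU₀sub, hU₀⟩ := parta
  refine ⟨⟨U₀, hU₀sub, hU₀⟩, ?_⟩
  -- part (b)
  intro U hU hmin
  set T : Set (Fin N) := {i | U i ≠ 0} with hT
  have hTcard : T.ncard ≤ k := by
    refine le_trans (hmin U₀ hU₀) (le_trans (Set.ncard_le_ncard hU₀sub (Set.toFinite S)) hScard)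
  have hST : S ⊆ T := by
    intro s hs
    rw [hS] at hs
    obtain ⟨n, hn⟩ := Set.mem_iUnion.mp hs
    obtain ⟨d, hd⟩ := (Submodule.mem_span_range_iff_exists_fun ℂ).mp (hmemZ n)
    set y : Fin N → ℂ := U.mulVec d with hy
    have hAy : A.mulVec y = z n := by
      rw [hy, Matrix.mulVec_mulVec, hU]
      funext i
      have := congrFun hd i
      simp only [Finset.sum_apply, Pi.smul_apply, smul_eq_mul] at this
      rw [← this]
      simp [mulVec, dotProduct, mul_comm]
    have hdiff : x n - y = 0 := by
      refine uniq (S ∪ T) ?_ (x n - y) ?_ ?_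
      · calc (S ∪ T).ncard ≤ S.ncard + T.ncard := Set.ncard_union_le S T
          _ ≤ k + k := add_le_add hScard hTcard
          _ = 2 * k := (two_mul k).symm
      · intro i hi
        by_contra hni
        simp only [Set.mem_union, not_or] at hni
        have hx0 : x n i = 0 := by
          by_contra hx
          exact hni.1 (hS ▸ Set.mem_iUnion.mpr ⟨n, hx⟩)
        have hy0 : y i = 0 := by
          have hU0 : U i = 0 := by
            by_contra hUi
            exact hni.2 hUi
          rw [hy]
          simp [mulVec, dotProduct, hU0]
        exact hi (by simp [Pi.sub_apply, hx0, hy0])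
      · rw [Matrix.mulVec_sub, hAy, hz n, sub_self]
    have hxy : x n = y := by
      have := congrArg (· + y) hdiff
      simpa [sub_add_cancel] using this
    have hys : y s ≠ 0 := by rw [← hxy]; exact hn
    have : U s ≠ 0 := by
      intro h0
      apply hys
      rw [hy]
      simp [mulVec, dotProduct, h0]
    exact this
  have hTS : T.ncard ≤ S.ncard :=
    le_trans (hmin U₀ hU₀) (Set.ncard_le_ncard hU₀sub (Set.toFinite S))
  exact (Set.eq_of_subset_of_ncard_le hST hTS (Set.toFinite T)).symm
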